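/- Let R be a commutative ring and f, g ∈ R[ℤ^r] with g ≠ 0. Suppose that for every vertex v of the Newton polytope of f, the coefficient of f at v is a unit of R. Then the Newton polytope of f·g equals the Minkowski sum of the Newton polytope of f and the Newton polytope of g. -/

import Mathlib

open Pointwise

/-- The Newton polytope of a Laurent polynomial f ∈ R[ℤ^r]: the convex hull in
ℝ^r of the set of exponents with nonzero coefficient. -/
noncomputable def newtonPolytope {R : Type*} [CommRing R] {r : ℕ}
    (f : AddMonoidAlgebra R (Fin r → ℤ)) : Set (Fin r → ℝ) :=
  convexHull ℝ ((fun m : Fin r → ℤ => fun j => (m j : ℝ)) '' ↑f.coeff.support)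

/-- If the coefficient of f at every vertex (extreme point) of its Newton
polytope is a unit and g ≠ 0, then the Newton polytope of f·g is the Minkowski
sum of those of f and g. -/
theorem newtonPolytope_mul {R : Type*} [CommRing R] {r : ℕ}
    (f g : AddMonoidAlgebra R (Fin r → ℤ)) (hg : g ≠ 0)
    (hf : ∀ m : Fin r → ℤ,
      (fun j => (m j : ℝ)) ∈ Set.extremePoints ℝ (newtonPolytope f) →
      IsUnit (f.coeff m)) :
    newtonPolytope (f * g) = newtonPolytope f + newtonPolytope g := by
  classical
  by_cases hf0 : f = 0
  · subst hf0
    simp [newtonPolytope, Set.empty_add]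
  set ι : (Fin r → ℤ) →+ (Fin r → ℝ) := (Int.castAddHom ℝ).compLeft (Fin r) with hιdef
  have hιeq : ⇑ι = fun m : Fin r → ℤ => fun j => (m j : ℝ) := rfl
  have hιinj : Function.Injective ι := by
    intro a b h
    funext j
    exact Int.cast_injective (congrFun h j)
  set A : Set (Fin r → ℝ) := ι '' ↑f.coeff.support with hA
  set B : Set (Fin r → ℝ) := ι '' ↑g.coeff.support with hB
  have hNPf : newtonPolytope f = convexHull ℝ A := by rw [newtonPolytope, hA, hιeq]
  have hNPg : newtonPolytope g = convexHull ℝ B := by rw [newtonPolytope, hB, hιeq]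
  have hNPfg : newtonPolytope (f * g) = convexHull ℝ (ι '' ↑(f * g).coeff.support) := by
    rw [newtonPolytope, hιeq]
  -- easy inclusion
  have hsub : newtonPolytope (f * g) ⊆ newtonPolytope f + newtonPolytope g := by
    rw [hNPfg, hNPf, hNPg, ← convexHull_add]
    apply convexHull_mono
    rw [← Set.image_add]
    apply Set.image_mono
    intro x hx
    have := AddMonoidAlgebra.support_coeff_mul_subset f g hx
    rwa [← Finset.coe_add]
  refine le_antisymm hsub ?_
  -- hard inclusion
  set S : Set (Fin r → ℝ) := newtonPolytope f + newtonPolytope g with hSdef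
  have hS : S = convexHull ℝ (A + B) := by rw [hSdef, hNPf, hNPg, convexHull_add]
  have hABfin : (A + B).Finite :=
    (f.coeff.support.finite_toSet.image _).add (g.coeff.support.finite_toSet.image _)
  have hScomp : IsCompact S := hS ▸ hABfin.isCompact_convexHull ℝ
  have hSconv : Convex ℝ S := hS ▸ convex_convexHull ℝ _
  have hextsub : S.extremePoints ℝ ⊆ A + B := hS ▸ extremePoints_convexHull_subset
  -- extreme points of S lie in the support of f*g
  have hext : S.extremePoints ℝ ⊆ ι '' ↑(f * g).coeff.support := by
    intro v hv
    obtain ⟨x, hx, y, hy, hxyv⟩ := Set.mem_add.1 (hextsub hv)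
    obtain ⟨a, ha, rfl⟩ := hx
    obtain ⟨b, hb, rfl⟩ := hy
    -- uniqueness of the decomposition
    have huniq : ∀ a' ∈ f.coeff.support, ∀ b' ∈ g.coeff.support, a' + b' = a + b → a' = a ∧ b' = b := by
      intro a' ha' b' hb' hab
      have hp : ι a' + ι b ∈ S :=
        Set.add_mem_add (hNPf ▸ subset_convexHull ℝ A ⟨a', ha', rfl⟩)
          (hNPg ▸ subset_convexHull ℝ B ⟨b, hb, rfl⟩)
      have hq : ι a + ι b' ∈ S :=
        Set.add_mem_add (hNPf ▸ subset_convexHull ℝ A ⟨a, ha, rfl⟩)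
          (hNPg ▸ subset_convexHull ℝ B ⟨b', hb', rfl⟩)
      have hsum : (ι a' + ι b) + (ι a + ι b') = v + v := by
        have h1 : ι a' + ι b' = ι a + ι b := by rw [← map_add, ← map_add, hab]
        calc (ι a' + ι b) + (ι a + ι b') = (ι a' + ι b') + (ι a + ι b) := by abel
          _ = v + v := by rw [h1, hxyv]
      have hmid : v ∈ openSegment ℝ (ι a' + ι b) (ι a + ι b') := by
        refine ⟨1/2, 1/2, by norm_num, by norm_num, by norm_num, ?_⟩
        have h2v : v + v = (2:ℝ) • v := by rw [two_smul]
        rw [← smul_add, hsum, h2v, smul_smul]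
        norm_num
      obtain ⟨h1, h2⟩ := (mem_extremePoints.1 hv).2 _ hp _ hq hmid
      rw [← hxyv] at h2
      have hb'b : ι b' = ι b := by
        have := add_left_cancel h2
        exact this
      have hbb : b' = b := hιinj hb'b
      subst hbb
      exact ⟨add_right_cancel hab, rfl⟩
    -- a is an extreme point of newtonPolytope f
    have haext : ι a ∈ (newtonPolytope f).extremePoints ℝ := by
      refine mem_extremePoints.2 ⟨hNPf ▸ subset_convexHull ℝ A ⟨a, ha, rfl⟩, ?_⟩
      intro x hx y hy hseg
      obtain ⟨c, d, hc, hd, hcd, hxy⟩ := hseg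
      have hbB : ι b ∈ newtonPolytope g := hNPg ▸ subset_convexHull ℝ B ⟨b, hb, rfl⟩
      have hx' : x + ι b ∈ S := Set.add_mem_add hx hbB
      have hy' : y + ι b ∈ S := Set.add_mem_add hy hbB
      have hvseg : v ∈ openSegment ℝ (x + ι b) (y + ι b) := by
        refine ⟨c, d, hc, hd, hcd, ?_⟩
        have : c • (x + ι b) + d • (y + ι b) = (c • x + d • y) + (c + d) • ι b := by
          rw [smul_add, smul_add, add_smul]; abel
        rw [this, hxy, hcd, one_smul, hxyv]
      obtain ⟨h1, h2⟩ := (mem_extremePoints.1 hv).2 _ hx' _ hy' hvseg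
      rw [← hxyv] at h1 h2
      exact ⟨add_right_cancel h1, add_right_cancel h2⟩
    have hfa : IsUnit (f.coeff a) := hf a haext
    have hgb : g.coeff b ≠ 0 := Finsupp.mem_support_iff.1 hb
    -- coefficient of f*g at a+b
    have hcoeff : (f * g).coeff (a + b) = f.coeff a * g.coeff b := by
      rw [AddMonoidAlgebra.coeff_mul, Finsupp.sum]
      rw [Finset.sum_eq_single a]
      · rw [Finsupp.sum, Finset.sum_eq_single b]
        · rw [if_pos rfl]
        · intro b' hb' hne
          rw [if_neg]
          intro h
          exact hne (add_left_cancel h)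
        · intro hbn
          exact absurd hb hbn
      · intro a' ha' hne
        rw [Finsupp.sum]
        apply Finset.sum_eq_zero
        intro b' hb'
        rw [if_neg]
        intro h
        exact hne (huniq a' ha' b' hb' h).1
      · intro han
        exact absurd ha han
    have hne : (f * g).coeff (a + b) ≠ 0 := by
      rw [hcoeff]
      intro h
      exact hgb ((IsUnit.mul_right_eq_zero hfa).1 h)
    exact ⟨a + b, Finsupp.mem_support_iff.2 hne, by rw [map_add, hxyv]⟩
  -- conclude via Krein-Milman
  have hKM : closure (convexHull ℝ (S.extremePoints ℝ)) = S :=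
    closure_convexHull_extremePoints hScomp hSconv
  have hclosed : IsClosed (convexHull ℝ (S.extremePoints ℝ)) :=
    (hABfin.subset hextsub).isClosed_convexHull ℝ
  calc S = closure (convexHull ℝ (S.extremePoints ℝ)) := hKM.symm
    _ = convexHull ℝ (S.extremePoints ℝ) := hclosed.closure_eq
    _ ⊆ convexHull ℝ (ι '' ↑(f * g).coeff.support) := convexHull_mono hext
    _ = newtonPolytope (f * g) := hNPfg.symm
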